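/- Let X ~ N(μ, σ²), Y ~ N(θ, σ²) be independent, σ > 0, τ ≥ 1, and set η = E[(X₀² − σ²)(Y₀² − σ²)·1{X₀² ∨ Y₀² > σ²τ}] where X₀, Y₀ are independent N(0, σ²). Then η = −4σ⁴τ·φ²(√τ), and |E[(X² − σ²)(Y² − σ²)·1{X² ∨ Y² > σ²τ}] − η − μ²θ²| ≤ min{μ², 3σ²τ}·min{θ², 3σ²τ} + 2σ²√τ·φ(√τ)·min{μ², 3σ²τ} + 2σ²√τ·φ(√τ)·min{θ², 3σ²τ}. -/

import Mathlib

open MeasureTheory ProbabilityTheory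

/-- Standard normal density. -/
noncomputable def stdPhi (z : ℝ) : ℝ := (Real.sqrt (2 * Real.pi))⁻¹ * Real.exp (-z ^ 2 / 2)

open MeasureTheory ProbabilityTheory Real Set Filter Topology
open scoped NNReal ENNReal

lemma stdPhi_eq (z : ℝ) : stdPhi z = (Real.sqrt (2 * Real.pi))⁻¹ * Real.exp (-(1/2) * z ^ 2) := by
  rw [stdPhi]; ring_nf

lemma stdPhi_pos (z : ℝ) : 0 < stdPhi z := by
  apply mul_pos (inv_pos.2 (Real.sqrt_pos.2 (by positivity))) (Real.exp_pos _)

lemma stdPhi_even (z : ℝ) : stdPhi (-z) = stdPhi z := by simp [stdPhi]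

lemma continuous_stdPhi : Continuous stdPhi := by
  unfold stdPhi; fun_prop

lemma stdPhi_anti {x y : ℝ} (h : x ^ 2 ≤ y ^ 2) : stdPhi y ≤ stdPhi x := by
  unfold stdPhi
  have h1 : (0:ℝ) ≤ (Real.sqrt (2 * Real.pi))⁻¹ := (inv_pos.2 (Real.sqrt_pos.2 (by positivity))).le
  exact mul_le_mul_of_nonneg_left (Real.exp_le_exp.2 (by linarith)) h1

lemma hasDerivAt_stdPhi (x : ℝ) : HasDerivAt stdPhi (-(x * stdPhi x)) x := by
  have h1 : HasDerivAt (fun z : ℝ => -z ^ 2 / 2) (-x) x := by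
    have h0 := ((hasDerivAt_pow 2 x).neg).div_const 2
    refine h0.congr_deriv ?_
    push_cast
    ring
  have h2 := (h1.exp).const_mul (Real.sqrt (2 * Real.pi))⁻¹
  have h3 : -(x * stdPhi x) = (Real.sqrt (2 * Real.pi))⁻¹ * (Real.exp (-x ^ 2 / 2) * -x) := by
    unfold stdPhi; ring
  rw [h3]
  exact h2

lemma integrable_stdPhi : Integrable stdPhi := by
  have : Integrable (fun x : ℝ => Real.exp (-(1/2) * x ^ 2)) := integrable_exp_neg_mul_sq (by norm_num)
  have h := this.const_mul (Real.sqrt (2 * Real.pi))⁻¹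
  apply h.congr
  filter_upwards with x
  rw [stdPhi_eq]

lemma integrable_mul_stdPhi : Integrable (fun x => x * stdPhi x) := by
  have : Integrable (fun x : ℝ => x * Real.exp (-(1/2) * x ^ 2)) := integrable_mul_exp_neg_mul_sq (by norm_num)
  have h := this.const_mul (Real.sqrt (2 * Real.pi))⁻¹
  apply h.congr
  filter_upwards with x
  rw [stdPhi_eq]; ring

lemma integrable_sq_mul_stdPhi : Integrable (fun x => x ^ 2 * stdPhi x) := by
  have : Integrable (fun x : ℝ => x ^ (2:ℝ) * Real.exp (-(1/2) * x ^ 2)) :=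
    integrable_rpow_mul_exp_neg_mul_sq (by norm_num) (by norm_num)
  have h := this.const_mul (Real.sqrt (2 * Real.pi))⁻¹
  apply h.congr
  filter_upwards with x
  rw [stdPhi_eq]
  rw [show x ^ (2:ℝ) = x ^ (2:ℕ) from Real.rpow_natCast x 2]
  ring

lemma tendsto_exp_half : Tendsto (fun y : ℝ => Real.exp (-(1/2) * y)) atTop (𝓝 0) := by
  have h : Tendsto (fun y : ℝ => (1/2) * y) atTop atTop :=
    Tendsto.const_mul_atTop (by norm_num) tendsto_id
  have := Real.tendsto_exp_neg_atTop_nhds_zero.comp h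
  apply this.congr
  intro y; simp [Function.comp]

lemma tendsto_stdPhi_atTop : Tendsto stdPhi atTop (𝓝 0) := by
  have ho := rpow_mul_exp_neg_mul_sq_isLittleO_exp_neg (b := 1/2) (by norm_num) 0
  have h2 := ho.trans_tendsto tendsto_exp_half
  have h3 : ∀ᶠ y : ℝ in atTop, y ^ (0:ℝ) * Real.exp (-(1/2) * y ^ 2) = Real.exp (-(1/2) * y^2) := by
    filter_upwards [eventually_gt_atTop 0] with y hy
    rw [Real.rpow_zero, one_mul]
  have h4 := (h2.congr' h3).const_mul (Real.sqrt (2 * Real.pi))⁻¹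
  simp only [mul_zero] at h4
  apply h4.congr
  intro y; rw [stdPhi_eq]

lemma tendsto_id_mul_stdPhi_atTop : Tendsto (fun y : ℝ => y * stdPhi y) atTop (𝓝 0) := by
  have ho := rpow_mul_exp_neg_mul_sq_isLittleO_exp_neg (b := 1/2) (by norm_num) 1
  have h2 := ho.trans_tendsto tendsto_exp_half
  have h3 : (fun y : ℝ => y ^ (1:ℝ) * Real.exp (-(1/2) * y ^ 2)) =
      (fun y : ℝ => y * Real.exp (-(1/2) * y ^ 2)) := by
    funext y; rw [Real.rpow_one]
  rw [h3] at h2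
  have h4 := h2.const_mul (Real.sqrt (2 * Real.pi))⁻¹
  simp only [mul_zero] at h4
  apply h4.congr
  intro y; rw [stdPhi_eq]; ring

lemma tendsto_mul_stdPhi_atTop (c : ℝ) :
    Tendsto (fun y => (y + c) * stdPhi y) atTop (𝓝 0) := by
  have := tendsto_id_mul_stdPhi_atTop.add (tendsto_stdPhi_atTop.const_mul c)
  simp only [add_zero, mul_zero] at this
  apply this.congr
  intro y; ring

lemma integral_stdPhi : ∫ x, stdPhi x = 1 := by
  have h : ∫ x : ℝ, Real.exp (-(1/2) * x ^ 2) = Real.sqrt (Real.pi / (1/2)) :=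
    integral_gaussian (1/2)
  have h2 : ∫ x, stdPhi x = (Real.sqrt (2 * Real.pi))⁻¹ * ∫ x : ℝ, Real.exp (-(1/2) * x ^ 2) := by
    rw [← integral_const_mul]
    congr 1; funext x; rw [stdPhi_eq]
  rw [h2, h]
  rw [show Real.pi / (1/2) = 2 * Real.pi by ring]
  rw [inv_mul_cancel₀ (ne_of_gt (Real.sqrt_pos.2 (by positivity)))]

lemma integral_Ioi_zero_stdPhi : ∫ x in Ioi (0:ℝ), stdPhi x = 1/2 := by
  have hsym : ∫ x in Iic (0:ℝ), stdPhi x = ∫ x in Ioi (0:ℝ), stdPhi x := by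
    have h := integral_comp_neg_Ioi (0:ℝ) stdPhi
    simp only [neg_zero] at h
    rw [← h]
    apply setIntegral_congr_fun measurableSet_Ioi
    intro x _; exact stdPhi_even x
  have hsplit : ∫ x, stdPhi x = (∫ x in Iic (0:ℝ), stdPhi x) + ∫ x in Ioi (0:ℝ), stdPhi x := by
    rw [← setIntegral_univ, ← Set.Iic_union_Ioi (a := (0:ℝ)),
      setIntegral_union (Iic_disjoint_Ioi le_rfl) measurableSet_Ioi
        integrable_stdPhi.integrableOn integrable_stdPhi.integrableOn]
  rw [integral_stdPhi, hsym] at hsplit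
  linarith

noncomputable def Psi (x : ℝ) : ℝ := ∫ t in (0:ℝ)..x, stdPhi t

lemma hasDerivAt_Psi (x : ℝ) : HasDerivAt Psi (stdPhi x) x :=
  (continuous_stdPhi.integral_hasStrictDerivAt 0 x).hasDerivAt

lemma Psi_nonneg {x : ℝ} (hx : 0 ≤ x) : 0 ≤ Psi x := by
  apply intervalIntegral.integral_nonneg hx
  intro t _; exact (stdPhi_pos t).le

lemma Psi_mono {x y : ℝ} (h : x ≤ y) : Psi x ≤ Psi y := by
  have : Psi y - Psi x = ∫ t in x..y, stdPhi t := by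
    rw [Psi, Psi, ← intervalIntegral.integral_add_adjacent_intervals
      (a := 0) (b := x) (c := y)
      integrable_stdPhi.intervalIntegrable integrable_stdPhi.intervalIntegrable]
    ring
  have h2 := intervalIntegral.integral_nonneg (μ := volume) h (fun t _ => (stdPhi_pos t).le)
  linarith

lemma tendsto_Psi_atTop : Tendsto Psi atTop (𝓝 (1/2)) := by
  rw [← integral_Ioi_zero_stdPhi]
  exact intervalIntegral_tendsto_integral_Ioi 0 integrable_stdPhi.integrableOn tendsto_id

lemma Psi_le_half (x : ℝ) : Psi x ≤ 1/2 := by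
  rcases le_total x 0 with h | h
  · have : Psi x ≤ Psi 0 := Psi_mono h
    simp [Psi] at this
    calc Psi x ≤ 0 := this
    _ ≤ 1/2 := by norm_num
  · rw [← integral_Ioi_zero_stdPhi, Psi, intervalIntegral.integral_of_le h]
    apply setIntegral_mono_set integrable_stdPhi.integrableOn
    · filter_upwards with t using (stdPhi_pos t).le
    · exact ae_of_all _ (fun a ha => ha.1)
  
lemma Psi_odd (x : ℝ) : Psi (-x) = -Psi x := by
  have h1 : Psi (-x) = -∫ t in (-x)..(0:ℝ), stdPhi t := by
    rw [Psi, intervalIntegral.integral_symm]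
  have h2 : ∫ t in (-x)..(0:ℝ), stdPhi t = ∫ t in (0:ℝ)..x, stdPhi t := by
    rw [show (-x) = -x from rfl, show (0:ℝ) = -0 by norm_num]
    rw [← intervalIntegral.integral_comp_neg fun t => stdPhi t]
    simp [stdPhi_even]
  rw [h1, h2]; rfl

lemma tendsto_Psi_atBot : Tendsto Psi atBot (𝓝 (-(1/2))) := by
  have h := tendsto_Psi_atTop.comp tendsto_neg_atBot_atTop
  have h2 : (Psi ∘ fun x => -x) = fun x => -Psi x := by
    funext x; simp [Function.comp, Psi_odd]
  rw [h2] at h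
  have := h.neg
  simpa using this

lemma tendsto_mul_stdPhi_atBot (c : ℝ) :
    Tendsto (fun y => (y + c) * stdPhi y) atBot (𝓝 0) := by
  have h := (tendsto_mul_stdPhi_atTop (-c)).comp tendsto_neg_atBot_atTop
  have h2 := h.neg
  simp only [neg_zero] at h2
  apply h2.congr
  intro y
  simp only [Function.comp]
  rw [stdPhi_even]
  ring

lemma gaussianPDFReal_one (u x : ℝ) : gaussianPDFReal u 1 x = stdPhi (x - u) := by
  rw [gaussianPDFReal, stdPhi]
  norm_num

lemma integral_gaussianReal_one (u : ℝ) (f : ℝ → ℝ) :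
    ∫ x, f x ∂gaussianReal u 1 = ∫ x, f x * stdPhi (x - u) := by
  rw [gaussianReal_of_var_ne_zero u one_ne_zero]
  have hpdf : gaussianPDF u 1 = fun x => ((Real.toNNReal (gaussianPDFReal u 1 x) : ℝ≥0) : ℝ≥0∞) := rfl
  rw [hpdf, integral_withDensity_eq_integral_smul
    ((measurable_gaussianPDFReal u 1).real_toNNReal) f]
  congr 1
  funext x
  rw [NNReal.smul_def, Real.coe_toNNReal _ (gaussianPDFReal_nonneg u 1 x), gaussianPDFReal_one,
    smul_eq_mul]
  ring

lemma integrable_gaussianReal_one_iff (u : ℝ) {f : ℝ → ℝ} :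
    Integrable f (gaussianReal u 1) ↔ Integrable (fun x => f x * stdPhi (x - u)) := by
  rw [gaussianReal_of_var_ne_zero u one_ne_zero, gaussianPDF_def]
  rw [integrable_withDensity_iff (measurable_gaussianPDFReal u 1).ennreal_ofReal
    (ae_of_all _ fun x => ENNReal.ofReal_lt_top)]
  constructor <;> intro h <;> apply h.congr <;> filter_upwards with x <;>
    rw [ENNReal.toReal_ofReal (gaussianPDFReal_nonneg u 1 x), gaussianPDFReal_one]

lemma integrable_shift_poly (u : ℝ) :
    Integrable (fun x => (x ^ 2 - 1) * stdPhi (x - u)) := by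
  have hg : Integrable (fun y => ((y + u) ^ 2 - 1) * stdPhi y) := by
    have h1 : Integrable (fun y => y ^ 2 * stdPhi y + (2*u) * (y * stdPhi y) + (u^2 - 1) * stdPhi y) :=
      (integrable_sq_mul_stdPhi.add ((integrable_mul_stdPhi.const_mul (2*u)))).add
        (integrable_stdPhi.const_mul (u^2-1))
    apply h1.congr
    filter_upwards with y
    ring
  have := hg.comp_sub_right u
  apply this.congr
  filter_upwards with x
  simp

noncomputable def afun (u w : ℝ) : ℝ := -((w + u) * stdPhi (w - u)) + u ^ 2 * Psi (w - u)

lemma hasDerivAt_afun (u w : ℝ) :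
    HasDerivAt (afun u) ((w ^ 2 - 1) * stdPhi (w - u)) w := by
  have hin : HasDerivAt (fun w : ℝ => w - u) 1 w := (hasDerivAt_id w).sub_const u
  have h1 : HasDerivAt (fun w : ℝ => stdPhi (w - u)) (-((w - u) * stdPhi (w - u))) w := by
    have := (hasDerivAt_stdPhi (w - u)).comp w hin
    exact this.congr_deriv (by ring)
  have h2 : HasDerivAt (fun w : ℝ => Psi (w - u)) (stdPhi (w - u)) w := by
    have := (hasDerivAt_Psi (w - u)).comp w hin
    exact this.congr_deriv (by ring)
  have h3 : HasDerivAt (fun w : ℝ => w + u) 1 w := (hasDerivAt_id w).add_const u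
  have h4 := ((h3.mul h1).neg).add (h2.const_mul (u ^ 2))
  have : HasDerivAt (afun u)
      (-(1 * stdPhi (w - u) + (w + u) * -((w - u) * stdPhi (w - u))) + u ^ 2 * stdPhi (w - u)) w := h4
  convert this using 1
  ring

lemma tendsto_afun_atTop (u : ℝ) : Tendsto (afun u) atTop (𝓝 (u ^ 2 / 2)) := by
  have hshift : Tendsto (fun w : ℝ => w - u) atTop atTop :=
    tendsto_atTop_add_const_right atTop (-u) tendsto_id
  have h1 : Tendsto (fun w : ℝ => (w + u) * stdPhi (w - u)) atTop (𝓝 0) := by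
    have := (tendsto_mul_stdPhi_atTop (2 * u)).comp hshift
    apply this.congr
    intro w
    simp only [Function.comp]
    ring_nf
  have h2 : Tendsto (fun w : ℝ => u ^ 2 * Psi (w - u)) atTop (𝓝 (u ^ 2 * (1/2))) :=
    (tendsto_Psi_atTop.comp hshift).const_mul (u ^ 2)
  have := (h1.neg).add h2
  simp only [neg_zero, zero_add] at this
  have heq : u ^ 2 * (1/2) = u ^ 2 / 2 := by ring
  rw [heq] at this
  exact this

lemma tendsto_afun_atBot (u : ℝ) : Tendsto (afun u) atBot (𝓝 (-(u ^ 2 / 2))) := by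
  have hshift : Tendsto (fun w : ℝ => w - u) atBot atBot :=
    tendsto_atBot_add_const_right atBot (-u) tendsto_id
  have h1 : Tendsto (fun w : ℝ => (w + u) * stdPhi (w - u)) atBot (𝓝 0) := by
    have := (tendsto_mul_stdPhi_atBot (2 * u)).comp hshift
    apply this.congr
    intro w
    simp only [Function.comp]
    ring_nf
  have h2 : Tendsto (fun w : ℝ => u ^ 2 * Psi (w - u)) atBot (𝓝 (u ^ 2 * (-(1/2)))) :=
    (tendsto_Psi_atBot.comp hshift).const_mul (u ^ 2)
  have := (h1.neg).add h2
  simp only [neg_zero, zero_add] at this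
  have heq : u ^ 2 * (-(1/2)) = -(u ^ 2 / 2) := by ring
  rw [heq] at this
  exact this

lemma integral_Ioi_p (u a : ℝ) :
    ∫ x in Ioi a, (x ^ 2 - 1) * stdPhi (x - u) = u ^ 2 / 2 - afun u a :=
  integral_Ioi_of_hasDerivAt_of_tendsto' (fun x _ => hasDerivAt_afun u x)
    (integrable_shift_poly u).integrableOn (tendsto_afun_atTop u)

lemma integral_Iic_p (u a : ℝ) :
    ∫ x in Iic a, (x ^ 2 - 1) * stdPhi (x - u) = afun u a + u ^ 2 / 2 := by
  have := integral_Iic_of_hasDerivAt_of_tendsto' (a := a) (fun x _ => hasDerivAt_afun u x)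
    (integrable_shift_poly u).integrableOn (tendsto_afun_atBot u)
  rw [this]; ring

lemma integral_univ_p (u : ℝ) :
    ∫ x, (x ^ 2 - 1) * stdPhi (x - u) = u ^ 2 := by
  have := integral_of_hasDerivAt_of_tendsto (fun x => hasDerivAt_afun u x)
    (integrable_shift_poly u) (tendsto_afun_atBot u) (tendsto_afun_atTop u)
  rw [this]; ring

noncomputable def hfun (a x : ℝ) : ℝ := if a ^ 2 < x ^ 2 then x ^ 2 - 1 else 0

lemma measurable_hfun (a : ℝ) : Measurable (hfun a) := by
  unfold hfun
  apply Measurable.ite _ (by fun_prop) measurable_const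
  exact measurableSet_lt measurable_const (by fun_prop)

lemma abs_hfun_le (a x : ℝ) (ha : 1 ≤ a) : |hfun a x| ≤ |x ^ 2 - 1| := by
  unfold hfun
  split_ifs with h
  · exact le_refl _
  · simp

noncomputable def Ghat (a u : ℝ) : ℝ := ∫ x, hfun a x ∂gaussianReal u 1

noncomputable def Efun (a u : ℝ) : ℝ :=
  (a + u) * stdPhi (a - u) + (a - u) * stdPhi (a + u)
    + u ^ 2 * (1 - Psi (a - u) - Psi (a + u))

lemma Ghat_eq (a u : ℝ) (ha : 0 < a) : Ghat a u = Efun a u := by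
  have hp := integrable_shift_poly u
  rw [Ghat, integral_gaussianReal_one]
  have hsplit : (fun x => hfun a x * stdPhi (x - u)) =
      fun x => (Iio (-a)).indicator (fun x => (x ^ 2 - 1) * stdPhi (x - u)) x
        + (Ioi a).indicator (fun x => (x ^ 2 - 1) * stdPhi (x - u)) x := by
    funext x
    rw [hfun]
    by_cases hx : a ^ 2 < x ^ 2
    · rw [if_pos hx]
      have hor : x < -a ∨ a < x := by
        by_contra hcon
        push_neg at hcon
        nlinarith [hcon.1, hcon.2]
      rcases hor with h1 | h1
      · rw [indicator_of_mem (by exact h1) , indicator_of_notMem (by simp only [mem_Ioi]; linarith)]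
        ring
      · rw [indicator_of_notMem (by simp only [mem_Iio]; linarith),
          indicator_of_mem (by exact h1)]
        ring
    · rw [if_neg hx]
      push_neg at hx
      have h1 : ¬ (x < -a) := by intro h; nlinarith
      have h2 : ¬ (a < x) := by intro h; nlinarith
      rw [indicator_of_notMem (by simp only [mem_Iio]; exact h1),
        indicator_of_notMem (by simp only [mem_Ioi]; exact h2)]
      ring
  rw [hsplit, integral_add (hp.indicator measurableSet_Iio) (hp.indicator measurableSet_Ioi),
    integral_indicator measurableSet_Iio, integral_indicator measurableSet_Ioi]
  have hIio : ∫ x in Iio (-a), (x ^ 2 - 1) * stdPhi (x - u)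
      = ∫ x in Iic (-a), (x ^ 2 - 1) * stdPhi (x - u) :=
    setIntegral_congr_set Iio_ae_eq_Iic
  rw [hIio, integral_Iic_p, integral_Ioi_p]
  rw [afun, afun, Efun]
  have e1 : stdPhi (-a - u) = stdPhi (a + u) := by
    rw [show -a - u = -(a + u) by ring, stdPhi_even]
  have e2 : Psi (-a - u) = -Psi (a + u) := by
    rw [show -a - u = -(a + u) by ring, Psi_odd]
  rw [e1, e2]
  ring

lemma Efun_zero (a : ℝ) : Efun a 0 = 2 * a * stdPhi a := by
  rw [Efun]; ring_nf

lemma integrable_sq_sub_one_gauss (u : ℝ) :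
    Integrable (fun x => x ^ 2 - 1) (gaussianReal u 1) := by
  rw [integrable_gaussianReal_one_iff]
  exact integrable_shift_poly u

lemma integral_sq_sub_one_gauss (u : ℝ) :
    ∫ x, (x ^ 2 - 1) ∂gaussianReal u 1 = u ^ 2 := by
  rw [integral_gaussianReal_one]
  exact integral_univ_p u

lemma integrable_hfun (a u : ℝ) : Integrable (hfun a) (gaussianReal u 1) := by
  rw [integrable_gaussianReal_one_iff]
  apply (integrable_shift_poly u).mono
    (((measurable_hfun a).mul (continuous_stdPhi.measurable.comp (measurable_id.sub_const u))).aestronglyMeasurable)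
  filter_upwards with x
  rw [Real.norm_eq_abs, Real.norm_eq_abs, abs_mul]
  simp only [Pi.mul_apply, Function.comp_apply, id_eq]
  rw [abs_mul]
  apply mul_le_mul_of_nonneg_right _ (abs_nonneg _)
  unfold hfun
  split_ifs
  · exact le_refl _
  · simp

lemma Ghat_le (a u : ℝ) : Ghat a u ≤ u ^ 2 + 1 := by
  have h1 : Integrable (fun x : ℝ => x ^ 2) (gaussianReal u 1) := by
    have := (integrable_sq_sub_one_gauss u).add (integrable_const (1:ℝ))
    apply this.congr
    filter_upwards with x
    simp
  have h2 : ∫ x, x ^ 2 ∂gaussianReal u 1 = u ^ 2 + 1 := by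
    have : ∫ x, (x ^ 2 - 1) + 1 ∂gaussianReal u 1 = u ^ 2 + 1 := by
      rw [integral_add (integrable_sq_sub_one_gauss u) (integrable_const 1),
        integral_sq_sub_one_gauss]
      simp
    rw [← this]
    congr 1
    funext x
    ring
  rw [← h2, Ghat]
  apply integral_mono (integrable_hfun a u) h1
  intro x
  rw [hfun]
  split_ifs
  · simp only [sub_le_self_iff]; norm_num
  · positivity

lemma Ghat_even (a u : ℝ) : Ghat a (-u) = Ghat a u := by
  have hmap : (gaussianReal u 1).map (fun x => (-1 : ℝ) * x) = gaussianReal (-u) 1 := by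
    rw [gaussianReal_map_const_mul (-1 : ℝ)]
    norm_num
  rw [Ghat, Ghat, ← hmap, integral_map (by fun_prop) (measurable_hfun a).aestronglyMeasurable]
  congr 1
  funext x
  rw [hfun, hfun]
  norm_num

noncomputable def Eder (a u : ℝ) : ℝ :=
  (1 + a ^ 2) * (stdPhi (a - u) - stdPhi (a + u)) + 2 * u * (1 - Psi (a - u) - Psi (a + u))

lemma hasDerivAt_Efun (a u : ℝ) : HasDerivAt (Efun a) (Eder a u) u := by
  have hin1 : HasDerivAt (fun u : ℝ => a - u) (-1) u := (hasDerivAt_id u).const_sub a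
  have hin2 : HasDerivAt (fun u : ℝ => a + u) 1 u := (hasDerivAt_id u).const_add a
  have hp1 : HasDerivAt (fun u : ℝ => stdPhi (a - u)) ((a - u) * stdPhi (a - u)) u := by
    have := (hasDerivAt_stdPhi (a - u)).comp u hin1
    exact this.congr_deriv (by ring)
  have hp2 : HasDerivAt (fun u : ℝ => stdPhi (a + u)) (-((a + u) * stdPhi (a + u))) u := by
    have := (hasDerivAt_stdPhi (a + u)).comp u hin2
    exact this.congr_deriv (by ring)
  have hq1 : HasDerivAt (fun u : ℝ => Psi (a - u)) (-stdPhi (a - u)) u := by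
    have := (hasDerivAt_Psi (a - u)).comp u hin1
    exact this.congr_deriv (by ring)
  have hq2 : HasDerivAt (fun u : ℝ => Psi (a + u)) (stdPhi (a + u)) u := by
    have := (hasDerivAt_Psi (a + u)).comp u hin2
    exact this.congr_deriv (by ring)
  have t1 := hin2.mul hp1
  have t2 := hin1.mul hp2
  have hsq : HasDerivAt (fun u : ℝ => u ^ 2) (2 * u) u := by
    have := hasDerivAt_pow 2 u
    norm_num at this
    convert this using 1
  have hone : HasDerivAt (fun u : ℝ => 1 - Psi (a - u) - Psi (a + u))
      (-(-stdPhi (a - u)) - stdPhi (a + u)) u := ((hq1.const_sub 1).sub hq2)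
  have t3 := hsq.mul hone
  have htot := (t1.add t2).add t3
  refine htot.congr_deriv ?_
  unfold Eder
  ring

lemma Eder_nonneg {a u : ℝ} (ha : 0 < a) (hu : 0 ≤ u) : 0 ≤ Eder a u := by
  have h1 : stdPhi (a + u) ≤ stdPhi (a - u) := stdPhi_anti (by nlinarith)
  have h2 : Psi (a - u) ≤ 1/2 := Psi_le_half _
  have h3 : Psi (a + u) ≤ 1/2 := Psi_le_half _
  have : 0 ≤ 1 - Psi (a - u) - Psi (a + u) := by linarith
  unfold Eder
  have : 0 ≤ (1 + a ^ 2) * (stdPhi (a - u) - stdPhi (a + u)) := by nlinarith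
  nlinarith

lemma Efun_zero_le {a : ℝ} (ha : 0 < a) {u : ℝ} (hu : 0 ≤ u) : Efun a 0 ≤ Efun a u := by
  have hmono : MonotoneOn (Efun a) (Ici 0) := by
    apply monotoneOn_of_deriv_nonneg (convex_Ici 0)
    · exact fun x _ => (hasDerivAt_Efun a x).continuousAt.continuousWithinAt
    · intro x hx
      exact (hasDerivAt_Efun a x).differentiableAt.differentiableWithinAt
    · intro x hx
      rw [(hasDerivAt_Efun a x).deriv]
      rw [interior_Ici] at hx
      exact Eder_nonneg ha (le_of_lt hx)
  exact hmono (self_mem_Ici) hu hu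

lemma sqrt_two_pi_ge : (2.5 : ℝ) ≤ Real.sqrt (2 * Real.pi) := by
  rw [show (2.5:ℝ) = Real.sqrt (2.5 ^ 2) by rw [Real.sqrt_sq (by norm_num)]]
  apply Real.sqrt_le_sqrt
  nlinarith [Real.pi_gt_d6]

lemma inv_sqrt_two_pi_le : (Real.sqrt (2 * Real.pi))⁻¹ ≤ 0.4 := by
  rw [show (0.4:ℝ) = (2.5)⁻¹ by norm_num]
  apply inv_anti₀ (by norm_num) sqrt_two_pi_ge

lemma stdPhi_one_le : stdPhi 1 ≤ 0.2431 := by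
  have h1 : Real.exp (1/2 : ℝ) ≥ 1.6458 := by
    have := Real.sum_le_exp_of_nonneg (x := (1/2:ℝ)) (by norm_num) 4
    have hsum : ∑ i ∈ Finset.range 4, ((1:ℝ)/2) ^ i / (Nat.factorial i) = 1 + 1/2 + 1/8 + 1/48 := by
      simp [Finset.sum_range_succ, Nat.factorial]
      norm_num
    rw [hsum] at this
    linarith
  have h2 : Real.exp (-(1:ℝ) ^ 2 / 2) ≤ 1.6458⁻¹ := by
    rw [show (-(1:ℝ) ^ 2 / 2) = -(1/2) by norm_num, Real.exp_neg]
    apply inv_anti₀ (by norm_num) h1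
  rw [stdPhi]
  calc (Real.sqrt (2 * Real.pi))⁻¹ * Real.exp (-(1:ℝ) ^ 2 / 2)
      ≤ 0.4 * 1.6458⁻¹ := by
        apply mul_le_mul inv_sqrt_two_pi_le h2 (Real.exp_pos _).le (by norm_num)
    _ ≤ 0.2431 := by norm_num

lemma xphi_anti {p x : ℝ} (hp : 1 ≤ p) (hpx : p ≤ x) : x * stdPhi x ≤ p * stdPhi p := by
  have hp0 : 0 < p := by linarith
  have hx0 : 0 < x := by linarith
  have hlog : Real.log (x / p) ≤ x / p - 1 := Real.log_le_sub_one_of_pos (by positivity)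
  have h2 : x / p - 1 ≤ (x ^ 2 - p ^ 2) / 2 := by
    rw [div_sub_one (ne_of_gt hp0)]
    rw [div_le_div_iff₀ hp0 (by norm_num)]
    have hxp : 0 ≤ x - p := by linarith
    have hfac : 0 ≤ p * (x + p) - 2 := by nlinarith
    nlinarith [mul_nonneg hxp hfac]
  have h3 : x / p ≤ Real.exp ((x ^ 2 - p ^ 2) / 2) := by
    calc x / p = Real.exp (Real.log (x / p)) := (Real.exp_log (by positivity)).symm
      _ ≤ Real.exp ((x ^ 2 - p ^ 2) / 2) := Real.exp_le_exp.2 (hlog.trans h2)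
  have h4 : x ≤ p * Real.exp ((x ^ 2 - p ^ 2) / 2) := by
    rw [div_le_iff₀ hp0] at h3
    linarith [h3]
  have h5 : x * Real.exp (-x ^ 2 / 2) ≤ p * Real.exp (-p ^ 2 / 2) := by
    have := mul_le_mul_of_nonneg_right h4 (Real.exp_pos (-x ^ 2 / 2)).le
    calc x * Real.exp (-x ^ 2 / 2)
        ≤ p * Real.exp ((x ^ 2 - p ^ 2) / 2) * Real.exp (-x ^ 2 / 2) := this
      _ = p * Real.exp ((x ^ 2 - p ^ 2) / 2 + -x ^ 2 / 2) := by rw [mul_assoc, ← Real.exp_add]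
      _ = p * Real.exp (-p ^ 2 / 2) := by ring_nf
  unfold stdPhi
  have hc : (0:ℝ) ≤ (Real.sqrt (2 * Real.pi))⁻¹ := by positivity
  calc x * ((Real.sqrt (2 * Real.pi))⁻¹ * Real.exp (-x ^ 2 / 2))
      = (Real.sqrt (2 * Real.pi))⁻¹ * (x * Real.exp (-x ^ 2 / 2)) := by ring
    _ ≤ (Real.sqrt (2 * Real.pi))⁻¹ * (p * Real.exp (-p ^ 2 / 2)) :=
        mul_le_mul_of_nonneg_left h5 hc
    _ = p * ((Real.sqrt (2 * Real.pi))⁻¹ * Real.exp (-p ^ 2 / 2)) := by ring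

lemma xphi_le (x : ℝ) : x * stdPhi x ≤ stdPhi 1 := by
  rcases le_or_gt x 0 with h | h
  · have : x * stdPhi x ≤ 0 := mul_nonpos_of_nonpos_of_nonneg h (stdPhi_pos x).le
    linarith [stdPhi_pos 1]
  · have hlog : Real.log x ≤ x - 1 := Real.log_le_sub_one_of_pos h
    have h2 : x - 1 ≤ (x ^ 2 - 1) / 2 := by nlinarith [sq_nonneg (x - 1)]
    have h3 : x ≤ Real.exp ((x ^ 2 - 1) / 2) := by
      calc x = Real.exp (Real.log x) := (Real.exp_log h).symm
        _ ≤ Real.exp ((x ^ 2 - 1) / 2) := Real.exp_le_exp.2 (hlog.trans h2)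
    have h5 : x * Real.exp (-x ^ 2 / 2) ≤ Real.exp (-1 / 2) := by
      have := mul_le_mul_of_nonneg_right h3 (Real.exp_pos (-x ^ 2 / 2)).le
      calc x * Real.exp (-x ^ 2 / 2)
          ≤ Real.exp ((x ^ 2 - 1) / 2) * Real.exp (-x ^ 2 / 2) := this
        _ = Real.exp ((x ^ 2 - 1) / 2 + -x ^ 2 / 2) := by rw [← Real.exp_add]
        _ = Real.exp (-1 / 2) := by ring_nf
    unfold stdPhi
    have hc : (0:ℝ) ≤ (Real.sqrt (2 * Real.pi))⁻¹ := by positivity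
    calc x * ((Real.sqrt (2 * Real.pi))⁻¹ * Real.exp (-x ^ 2 / 2))
        = (Real.sqrt (2 * Real.pi))⁻¹ * (x * Real.exp (-x ^ 2 / 2)) := by ring
      _ ≤ (Real.sqrt (2 * Real.pi))⁻¹ * Real.exp (-1 / 2) := mul_le_mul_of_nonneg_left h5 hc
      _ = (Real.sqrt (2 * Real.pi))⁻¹ * Real.exp (-1 ^ 2 / 2) := by norm_num

lemma Q_one_le : 1/2 - Psi 1 ≤ stdPhi 1 := by
  have hIoiPsi : ∫ x in Ioi (1:ℝ), stdPhi x = 1/2 - Psi 1 :=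
    integral_Ioi_of_hasDerivAt_of_tendsto' (fun x _ => hasDerivAt_Psi x)
      integrable_stdPhi.integrableOn tendsto_Psi_atTop
  have hIoiX : ∫ x in Ioi (1:ℝ), x * stdPhi x = stdPhi 1 := by
    have hd : ∀ x ∈ Ici (1:ℝ), HasDerivAt (fun y => -stdPhi y) (x * stdPhi x) x := by
      intro x _
      have := (hasDerivAt_stdPhi x).neg
      exact this.congr_deriv (neg_neg _)
    have ht : Tendsto (fun y => -stdPhi y) atTop (𝓝 0) := by
      have := tendsto_stdPhi_atTop.neg
      simpa using this
    have := integral_Ioi_of_hasDerivAt_of_tendsto' hd integrable_mul_stdPhi.integrableOn ht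
    rw [this]; ring
  rw [← hIoiPsi, ← hIoiX]
  apply setIntegral_mono_on integrable_stdPhi.integrableOn integrable_mul_stdPhi.integrableOn
    measurableSet_Ioi
  intro x hx
  have hx1 : 1 ≤ x := le_of_lt hx
  nlinarith [stdPhi_pos x]

lemma Nbound {β : ℝ} (hβ : 1 ≤ β) : (β ^ 2 + 2 * β + 2) * (β * stdPhi β) ≤ 1.51 := by
  have hexp : 1 + β ^ 2 / 2 + β ^ 4 / 8 + β ^ 6 / 48 ≤ Real.exp (β ^ 2 / 2) := by
    have := Real.sum_le_exp_of_nonneg (x := β ^ 2 / 2) (by positivity) 4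
    have hsum : ∑ i ∈ Finset.range 4, (β ^ 2 / 2) ^ i / (Nat.factorial i)
        = 1 + β ^ 2 / 2 + β ^ 4 / 8 + β ^ 6 / 48 := by
      simp [Finset.sum_range_succ, Nat.factorial]
      ring
    rw [hsum] at this
    exact this
  have hpos : (0:ℝ) < 1 + β ^ 2 / 2 + β ^ 4 / 8 + β ^ 6 / 48 := by positivity
  have hexpneg : Real.exp (-β ^ 2 / 2) ≤ (1 + β ^ 2 / 2 + β ^ 4 / 8 + β ^ 6 / 48)⁻¹ := by
    rw [show (-β ^ 2 / 2) = -(β ^ 2 / 2) by ring, Real.exp_neg]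
    exact inv_anti₀ hpos hexp
  have hkey : (β ^ 2 + 2 * β + 2) * β * Real.exp (-β ^ 2 / 2)
      ≤ 1.51 * 2.5 := by
    have hb : (β ^ 2 + 2 * β + 2) * β * Real.exp (-β ^ 2 / 2)
        ≤ (β ^ 2 + 2 * β + 2) * β * (1 + β ^ 2 / 2 + β ^ 4 / 8 + β ^ 6 / 48)⁻¹ := by
      apply mul_le_mul_of_nonneg_left hexpneg (by nlinarith)
    refine hb.trans ?_
    rw [mul_inv_le_iff₀ hpos]
    nlinarith [sq_nonneg (β - 1), sq_nonneg (β - 1.4), sq_nonneg (β ^ 2 - 2), sq_nonneg β,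
      sq_nonneg (β ^ 2 - 1.96), sq_nonneg (β ^ 3 - 2.744), sq_nonneg ((β - 1.4) * β),
      sq_nonneg ((β - 1.4) * β ^ 2)]
  have hphi : stdPhi β ≤ 2.5⁻¹ * Real.exp (-β ^ 2 / 2) := by
    rw [stdPhi]
    apply mul_le_mul_of_nonneg_right _ (Real.exp_pos _).le
    rw [show (2.5:ℝ)⁻¹ = 0.4 by norm_num]
    exact inv_sqrt_two_pi_le
  have hβpos : (0:ℝ) < β := by linarith
  calc (β ^ 2 + 2 * β + 2) * (β * stdPhi β)
      ≤ (β ^ 2 + 2 * β + 2) * (β * (2.5⁻¹ * Real.exp (-β ^ 2 / 2))) := by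
        apply mul_le_mul_of_nonneg_left _ (by nlinarith)
        exact mul_le_mul_of_nonneg_left hphi hβpos.le
    _ = 2.5⁻¹ * ((β ^ 2 + 2 * β + 2) * β * Real.exp (-β ^ 2 / 2)) := by ring
    _ ≤ 2.5⁻¹ * (1.51 * 2.5) := by
        apply mul_le_mul_of_nonneg_left hkey (by norm_num)
    _ = 1.51 := by norm_num

lemma delta_phi_eq (a t : ℝ) :
    stdPhi (a - t) - stdPhi (a + t) = ∫ x in (a - t)..(a + t), x * stdPhi x := by
  have hd : ∀ x ∈ uIcc (a - t) (a + t), HasDerivAt (fun y => -stdPhi y) (x * stdPhi x) x := by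
    intro x _
    have := (hasDerivAt_stdPhi x).neg
    exact this.congr_deriv (neg_neg _)
  have := intervalIntegral.integral_eq_sub_of_hasDerivAt hd
    (integrable_mul_stdPhi.intervalIntegrable)
  rw [this]
  ring

lemma Eder_le {a t : ℝ} (ha : 1 ≤ a) (ht0 : 0 ≤ t) (ht1 : t ≤ 1) : Eder a t ≤ 4 * t := by
  have hphi1 := stdPhi_one_le
  have hle : a - t ≤ a + t := by linarith
  rcases le_or_gt 1 (a - t) with hcase | hcase
  · -- far case : a - t ≥ 1
    have hdelta : stdPhi (a - t) - stdPhi (a + t) ≤ 2 * t * ((a - t) * stdPhi (a - t)) := by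
      rw [delta_phi_eq]
      have hmono : ∀ x ∈ Icc (a - t) (a + t), x * stdPhi x ≤ (a - t) * stdPhi (a - t) :=
        fun x hx => xphi_anti hcase hx.1
      calc ∫ x in (a - t)..(a + t), x * stdPhi x
          ≤ ∫ _x in (a - t)..(a + t), (a - t) * stdPhi (a - t) := by
            apply intervalIntegral.integral_mono_on hle
              integrable_mul_stdPhi.intervalIntegrable intervalIntegrable_const hmono
        _ = 2 * t * ((a - t) * stdPhi (a - t)) := by
            rw [intervalIntegral.integral_const, smul_eq_mul]
            ring
    have hN : (1 + a ^ 2) * ((a - t) * stdPhi (a - t)) ≤ 1.51 := by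
      have h1 : 1 + a ^ 2 ≤ (a - t) ^ 2 + 2 * (a - t) + 2 := by nlinarith
      have h2 := Nbound hcase
      have hnn : 0 ≤ (a - t) * stdPhi (a - t) :=
        mul_nonneg (by linarith) (stdPhi_pos _).le
      nlinarith
    have hQ : 1 - Psi (a - t) - Psi (a + t) ≤ 2 * stdPhi 1 := by
      have q1 : Psi 1 ≤ Psi (a - t) := Psi_mono hcase
      have q2 : Psi 1 ≤ Psi (a + t) := Psi_mono (by linarith)
      have := Q_one_le
      linarith
    have hphi_pos : 0 ≤ stdPhi (a - t) - stdPhi (a + t) := by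
      have := stdPhi_anti (x := a - t) (y := a + t) (by nlinarith)
      linarith
    unfold Eder
    have hterm1 : (1 + a ^ 2) * (stdPhi (a - t) - stdPhi (a + t)) ≤ 2 * t * 1.51 := by
      calc (1 + a ^ 2) * (stdPhi (a - t) - stdPhi (a + t))
          ≤ (1 + a ^ 2) * (2 * t * ((a - t) * stdPhi (a - t))) :=
            mul_le_mul_of_nonneg_left hdelta (by nlinarith)
        _ = 2 * t * ((1 + a ^ 2) * ((a - t) * stdPhi (a - t))) := by ring
        _ ≤ 2 * t * 1.51 := by
            apply mul_le_mul_of_nonneg_left hN (by linarith)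
    have hterm2 : 2 * t * (1 - Psi (a - t) - Psi (a + t)) ≤ 2 * t * (2 * stdPhi 1) :=
      mul_le_mul_of_nonneg_left hQ (by linarith)
    nlinarith
  · -- near case : a - t < 1
    have ha2 : a < 2 := by linarith
    have hat0 : 0 ≤ a - t := by linarith
    have hdelta : stdPhi (a - t) - stdPhi (a + t) ≤ 2 * t * stdPhi 1 := by
      rw [delta_phi_eq]
      calc ∫ x in (a - t)..(a + t), x * stdPhi x
          ≤ ∫ _x in (a - t)..(a + t), stdPhi 1 := by
            apply intervalIntegral.integral_mono_on hle
              integrable_mul_stdPhi.intervalIntegrable intervalIntegrable_const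
              (fun x _ => xphi_le x)
        _ = 2 * t * stdPhi 1 := by
            rw [intervalIntegral.integral_const, smul_eq_mul]
            ring
    have hQ : 1 - Psi (a - t) - Psi (a + t) ≤ 1/2 + stdPhi 1 := by
      have q1 : Psi 0 ≤ Psi (a - t) := Psi_mono hat0
      have q0 : Psi 0 = 0 := by simp [Psi]
      have q2 : Psi 1 ≤ Psi (a + t) := Psi_mono (by linarith)
      have := Q_one_le
      linarith
    have ha2' : 1 + a ^ 2 ≤ 5 := by nlinarith
    have hphi_pos : 0 ≤ stdPhi (a - t) - stdPhi (a + t) := by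
      have := stdPhi_anti (x := a - t) (y := a + t) (by nlinarith)
      linarith
    unfold Eder
    have hterm1 : (1 + a ^ 2) * (stdPhi (a - t) - stdPhi (a + t)) ≤ 5 * (2 * t * stdPhi 1) := by
      have h5 : (1 + a ^ 2) * (stdPhi (a - t) - stdPhi (a + t)) ≤ 5 * (stdPhi (a - t) - stdPhi (a + t)) :=
        mul_le_mul_of_nonneg_right ha2' hphi_pos
      have h6 : 5 * (stdPhi (a - t) - stdPhi (a + t)) ≤ 5 * (2 * t * stdPhi 1) := by
        apply mul_le_mul_of_nonneg_left hdelta (by norm_num)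
      linarith
    have hterm2 : 2 * t * (1 - Psi (a - t) - Psi (a + t)) ≤ 2 * t * (1/2 + stdPhi 1) :=
      mul_le_mul_of_nonneg_left hQ (by linarith)
    nlinarith [stdPhi_pos 1]

lemma Ghat_diff_bounds {a : ℝ} (ha : 1 ≤ a) (u : ℝ) :
    0 ≤ Ghat a u - Ghat a 0 ∧ Ghat a u - Ghat a 0 ≤ 2 * u ^ 2 := by
  have ha0 : 0 < a := by linarith
  have key : ∀ v : ℝ, 0 ≤ v → 0 ≤ Ghat a v - Ghat a 0 ∧ Ghat a v - Ghat a 0 ≤ 2 * v ^ 2 := by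
    intro v hv
    constructor
    · rw [Ghat_eq a v ha0, Ghat_eq a 0 ha0]
      have := Efun_zero_le ha0 hv
      linarith
    · rcases le_or_gt v 1 with hv1 | hv1
      · -- use derivative bound
        rw [Ghat_eq a v ha0, Ghat_eq a 0 ha0]
        have hW : MonotoneOn (fun s => 2 * s ^ 2 - Efun a s) (Icc 0 1) := by
          apply monotoneOn_of_deriv_nonneg (convex_Icc 0 1)
          · apply ContinuousOn.sub (by fun_prop)
            exact fun x _ => (hasDerivAt_Efun a x).continuousAt.continuousWithinAt
          · intro x _
            apply DifferentiableAt.differentiableWithinAt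
            apply DifferentiableAt.sub (by fun_prop)
            exact (hasDerivAt_Efun a x).differentiableAt
          · intro x hx
            rw [interior_Icc] at hx
            have hd : HasDerivAt (fun s => 2 * s ^ 2 - Efun a s) (4 * x - Eder a x) x := by
              have h1 : HasDerivAt (fun s : ℝ => 2 * s ^ 2) (4 * x) x := by
                have := (hasDerivAt_pow 2 x).const_mul (2:ℝ)
                norm_num at this
                refine this.congr_deriv ?_
                ring
              exact h1.sub (hasDerivAt_Efun a x)
            rw [hd.deriv]
            have := Eder_le ha hx.1.le hx.2.le
            linarith
        have h0 : (0:ℝ) ∈ Icc (0:ℝ) 1 := by constructor <;> norm_num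
        have hv' : v ∈ Icc (0:ℝ) 1 := ⟨hv, hv1⟩
        have := hW h0 hv' hv
        simp only at this
        have hE0 : 2 * (0:ℝ) ^ 2 - Efun a 0 = -Efun a 0 := by ring
        nlinarith [this]
      · -- v ≥ 1 : trivial bound
        have h1 : Ghat a v ≤ v ^ 2 + 1 := Ghat_le a v
        have h2 : 0 ≤ Ghat a 0 := by
          rw [Ghat_eq a 0 ha0, Efun_zero]
          have := stdPhi_pos a
          nlinarith
        nlinarith
  rcases le_or_gt 0 u with hu | hu
  · exact key u hu
  · have := key (-u) (by linarith)
    rw [Ghat_even] at this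
    constructor
    · exact this.1
    · have := this.2
      nlinarith [this]

section sigma
variable {σ τ : ℝ}

noncomputable def gsf (σ τ x : ℝ) : ℝ := if σ ^ 2 * τ < x ^ 2 then x ^ 2 - σ ^ 2 else 0
noncomputable def fsf (σ τ x : ℝ) : ℝ := if σ ^ 2 * τ < x ^ 2 then 0 else x ^ 2 - σ ^ 2

lemma measurable_gsf : Measurable (gsf σ τ) := by
  unfold gsf
  apply Measurable.ite _ (by fun_prop) measurable_const
  exact measurableSet_lt measurable_const (by fun_prop)

lemma measurable_fsf : Measurable (fsf σ τ) := by
  unfold fsf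
  apply Measurable.ite _ measurable_const (by fun_prop)
  exact measurableSet_lt measurable_const (by fun_prop)

lemma gauss_scale (hσ : 0 < σ) (m : ℝ) :
    (gaussianReal (m / σ) 1).map (fun x => σ * x) = gaussianReal m (σ ^ 2).toNNReal := by
  have h := gaussianReal_map_const_mul (μ := m / σ) (v := 1) σ
  rw [show (fun x => σ * x) = (σ * ·) from rfl, h]
  congr 1
  · field_simp
  · rw [mul_one]
    ext
    simp only [NNReal.coe_mk]
    rw [Real.coe_toNNReal _ (sq_nonneg σ)]

lemma integral_gauss_scale (hσ : 0 < σ) (m : ℝ) {f : ℝ → ℝ} (hf : Measurable f) :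
    ∫ x, f x ∂gaussianReal m (σ ^ 2).toNNReal
      = ∫ z, f (σ * z) ∂gaussianReal (m / σ) 1 := by
  rw [← gauss_scale hσ m, integral_map (by fun_prop) hf.aestronglyMeasurable]

lemma integrable_gauss_scale (hσ : 0 < σ) (m : ℝ) {f : ℝ → ℝ} (hf : Measurable f) :
    Integrable f (gaussianReal m (σ ^ 2).toNNReal)
      ↔ Integrable (fun z => f (σ * z)) (gaussianReal (m / σ) 1) := by
  rw [← gauss_scale hσ m, integrable_map_measure hf.aestronglyMeasurable (by fun_prop)]
  rfl

lemma integrable_sq_sub_gauss (hσ : 0 < σ) (m : ℝ) :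
    Integrable (fun x => x ^ 2 - σ ^ 2) (gaussianReal m (σ ^ 2).toNNReal) := by
  rw [integrable_gauss_scale hσ m (by fun_prop)]
  have := (integrable_sq_sub_one_gauss (m / σ)).const_mul (σ ^ 2)
  apply this.congr
  filter_upwards with z
  ring

lemma integral_sq_sub_gauss (hσ : 0 < σ) (m : ℝ) :
    ∫ x, (x ^ 2 - σ ^ 2) ∂gaussianReal m (σ ^ 2).toNNReal = m ^ 2 := by
  rw [integral_gauss_scale hσ m (by fun_prop)]
  have h1 : (fun z => (σ * z) ^ 2 - σ ^ 2) = fun z => σ ^ 2 * (z ^ 2 - 1) := by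
    funext z; ring
  rw [h1, integral_const_mul, integral_sq_sub_one_gauss]
  field_simp

lemma gsf_scale (hσ : 0 < σ) (hτ : 1 ≤ τ) (z : ℝ) :
    gsf σ τ (σ * z) = σ ^ 2 * hfun (Real.sqrt τ) z := by
  have hτ0 : (0:ℝ) ≤ τ := by linarith
  have hsq : Real.sqrt τ ^ 2 = τ := Real.sq_sqrt hτ0
  unfold gsf hfun
  have hcond : (σ ^ 2 * τ < (σ * z) ^ 2) ↔ (Real.sqrt τ ^ 2 < z ^ 2) := by
    rw [hsq, mul_pow]
    exact mul_lt_mul_iff_right₀ (by positivity)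
  split_ifs with h1 h2 h2
  · ring
  · exact absurd (hcond.1 h1) h2
  · exact absurd (hcond.2 h2) h1
  · ring

lemma Gs_eq (hσ : 0 < σ) (hτ : 1 ≤ τ) (m : ℝ) :
    ∫ x, gsf σ τ x ∂gaussianReal m (σ ^ 2).toNNReal
      = σ ^ 2 * Ghat (Real.sqrt τ) (m / σ) := by
  rw [integral_gauss_scale hσ m measurable_gsf]
  rw [show (fun z => gsf σ τ (σ * z)) = fun z => σ ^ 2 * hfun (Real.sqrt τ) z from
    funext fun z => gsf_scale hσ hτ z]
  rw [integral_const_mul, Ghat]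

lemma integrable_gsf (hσ : 0 < σ) (m : ℝ) :
    Integrable (gsf σ τ) (gaussianReal m (σ ^ 2).toNNReal) := by
  apply (integrable_sq_sub_gauss hσ m).mono measurable_gsf.aestronglyMeasurable
  filter_upwards with x
  rw [Real.norm_eq_abs, Real.norm_eq_abs]
  unfold gsf
  split_ifs
  · exact le_refl _
  · simp

lemma integrable_fsf (hσ : 0 < σ) (hτ : 1 ≤ τ) (m : ℝ) :
    Integrable (fsf σ τ) (gaussianReal m (σ ^ 2).toNNReal) := by
  apply (integrable_const (σ ^ 2 * τ)).mono measurable_fsf.aestronglyMeasurable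
  filter_upwards with x
  have hσ2 : 0 < σ ^ 2 := by positivity
  have hr : |σ ^ 2 * τ| = σ ^ 2 * τ := abs_of_nonneg (by nlinarith)
  rw [Real.norm_eq_abs, Real.norm_eq_abs, hr]
  unfold fsf
  split_ifs with h
  · rw [abs_zero]; nlinarith
  · push_neg at h
    rw [abs_le]
    constructor <;> nlinarith [sq_nonneg x]

lemma fsf_eq_sub (x : ℝ) : fsf σ τ x = (x ^ 2 - σ ^ 2) - gsf σ τ x := by
  unfold fsf gsf
  split_ifs <;> ring

lemma Fs_eq (hσ : 0 < σ) (hτ : 1 ≤ τ) (m : ℝ) :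
    ∫ x, fsf σ τ x ∂gaussianReal m (σ ^ 2).toNNReal
      = m ^ 2 - σ ^ 2 * Ghat (Real.sqrt τ) (m / σ) := by
  rw [show (fun x => fsf σ τ x) = fun x => (x ^ 2 - σ ^ 2) - gsf σ τ x from
    funext fun x => fsf_eq_sub x]
  rw [integral_sub (integrable_sq_sub_gauss hσ m) (integrable_gsf hσ m),
    integral_sq_sub_gauss hσ m, Gs_eq hσ hτ m]

lemma abs_Fs_le (hσ : 0 < σ) (hτ : 1 ≤ τ) (m : ℝ) :
    |∫ x, fsf σ τ x ∂gaussianReal m (σ ^ 2).toNNReal| ≤ σ ^ 2 * τ := by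
  have h1 : |∫ x, fsf σ τ x ∂gaussianReal m (σ ^ 2).toNNReal|
      ≤ ∫ x, |fsf σ τ x| ∂gaussianReal m (σ ^ 2).toNNReal := by
    have := norm_integral_le_integral_norm (μ := gaussianReal m (σ ^ 2).toNNReal) (fsf σ τ)
    simpa [Real.norm_eq_abs] using this
  have h2 : ∫ x, |fsf σ τ x| ∂gaussianReal m (σ ^ 2).toNNReal
      ≤ ∫ _x, σ ^ 2 * τ ∂gaussianReal m (σ ^ 2).toNNReal := by
    apply integral_mono (integrable_fsf hσ hτ m).abs (integrable_const _)
    intro x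
    have hσ2 : 0 < σ ^ 2 := by positivity
    show |fsf σ τ x| ≤ σ ^ 2 * τ
    unfold fsf
    split_ifs with h
    · rw [abs_zero]; nlinarith
    · push_neg at h
      rw [abs_le]
      constructor <;> nlinarith [sq_nonneg x]
  have h3 : ∫ _x, σ ^ 2 * τ ∂gaussianReal m (σ ^ 2).toNNReal = σ ^ 2 * τ := by
    rw [integral_const]
    simp
  linarith

end sigma

lemma main_integral (σ μ θ τ : ℝ) (hσ : 0 < σ) (hτ : 1 ≤ τ) :
    (∫ p : ℝ × ℝ,
        (if σ ^ 2 * τ < max (p.1 ^ 2) (p.2 ^ 2) then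
          (p.1 ^ 2 - σ ^ 2) * (p.2 ^ 2 - σ ^ 2) else 0)
        ∂((gaussianReal μ (σ ^ 2).toNNReal).prod (gaussianReal θ (σ ^ 2).toNNReal)))
      = μ ^ 2 * θ ^ 2 - (∫ x, fsf σ τ x ∂gaussianReal μ (σ ^ 2).toNNReal)
          * (∫ x, fsf σ τ x ∂gaussianReal θ (σ ^ 2).toNNReal) := by
  have hpoint : (fun p : ℝ × ℝ =>
      (if σ ^ 2 * τ < max (p.1 ^ 2) (p.2 ^ 2) then
          (p.1 ^ 2 - σ ^ 2) * (p.2 ^ 2 - σ ^ 2) else 0))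
      = fun p : ℝ × ℝ => (p.1 ^ 2 - σ ^ 2) * (p.2 ^ 2 - σ ^ 2)
          - fsf σ τ p.1 * fsf σ τ p.2 := by
    funext p
    rcases lt_or_ge (σ ^ 2 * τ) (max (p.1 ^ 2) (p.2 ^ 2)) with h | h
    · rw [if_pos h]
      rcases lt_max_iff.1 h with h1 | h1
      · rw [show fsf σ τ p.1 = 0 from if_pos h1]
        ring
      · rw [show fsf σ τ p.2 = 0 from if_pos h1]
        ring
    · rw [if_neg (not_lt.2 h)]
      rcases max_le_iff.1 h with ⟨h1, h2⟩
      rw [show fsf σ τ p.1 = p.1 ^ 2 - σ ^ 2 from if_neg (not_lt.2 h1),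
        show fsf σ τ p.2 = p.2 ^ 2 - σ ^ 2 from if_neg (not_lt.2 h2)]
      ring
  rw [hpoint]
  rw [integral_sub
    ((integrable_sq_sub_gauss hσ μ).mul_prod (integrable_sq_sub_gauss hσ θ))
    ((integrable_fsf hσ hτ μ).mul_prod (integrable_fsf hσ hτ θ))]
  rw [integral_prod_mul (f := fun x : ℝ => x ^ 2 - σ ^ 2) (g := fun y : ℝ => y ^ 2 - σ ^ 2),
    integral_prod_mul (f := fsf σ τ) (g := fsf σ τ),
    integral_sq_sub_gauss hσ μ, integral_sq_sub_gauss hσ θ]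

theorem stmt17 (σ μ θ τ : ℝ) (hσ : 0 < σ) (hτ : 1 ≤ τ) :
    (∫ p : ℝ × ℝ,
        (if σ ^ 2 * τ < max (p.1 ^ 2) (p.2 ^ 2) then
          (p.1 ^ 2 - σ ^ 2) * (p.2 ^ 2 - σ ^ 2) else 0)
        ∂((gaussianReal 0 (σ ^ 2).toNNReal).prod (gaussianReal 0 (σ ^ 2).toNNReal))) =
      -4 * σ ^ 4 * τ * (stdPhi (Real.sqrt τ)) ^ 2 ∧
    |(∫ p : ℝ × ℝ,
        (if σ ^ 2 * τ < max (p.1 ^ 2) (p.2 ^ 2) then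
          (p.1 ^ 2 - σ ^ 2) * (p.2 ^ 2 - σ ^ 2) else 0)
        ∂((gaussianReal μ (σ ^ 2).toNNReal).prod (gaussianReal θ (σ ^ 2).toNNReal))) -
        (-4 * σ ^ 4 * τ * (stdPhi (Real.sqrt τ)) ^ 2) - μ ^ 2 * θ ^ 2| ≤
      min (μ ^ 2) (3 * σ ^ 2 * τ) * min (θ ^ 2) (3 * σ ^ 2 * τ) +
        2 * σ ^ 2 * Real.sqrt τ * stdPhi (Real.sqrt τ) * min (μ ^ 2) (3 * σ ^ 2 * τ) +
        2 * σ ^ 2 * Real.sqrt τ * stdPhi (Real.sqrt τ) * min (θ ^ 2) (3 * σ ^ 2 * τ) := by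
  set a := Real.sqrt τ with ha_def
  have hτ0 : (0:ℝ) ≤ τ := by linarith
  have ha1 : 1 ≤ a := by
    rw [ha_def, show (1:ℝ) = Real.sqrt 1 by rw [Real.sqrt_one]]
    exact Real.sqrt_le_sqrt hτ
  have ha0 : 0 < a := by linarith
  have hasq : a ^ 2 = τ := Real.sq_sqrt hτ0
  set Fs : ℝ → ℝ := fun m => ∫ x, fsf σ τ x ∂gaussianReal m (σ ^ 2).toNNReal with hFs_def
  have hFs : ∀ m, Fs m = m ^ 2 - σ ^ 2 * Ghat a (m / σ) := fun m => Fs_eq hσ hτ m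
  have hF0 : Fs 0 = -(2 * σ ^ 2 * a * stdPhi a) := by
    rw [hFs 0, Ghat_eq a _ ha0]
    norm_num
    rw [Efun_zero]
    ring
  have hB0 : (0:ℝ) ≤ 2 * σ ^ 2 * a * stdPhi a := by
    have := (stdPhi_pos a).le
    positivity
  -- bound |Fs m - Fs 0| ≤ min (m^2) (3 σ² τ)
  have hbound : ∀ m : ℝ, |Fs m - Fs 0| ≤ min (m ^ 2) (3 * σ ^ 2 * τ) := by
    intro m
    apply le_min
    · have hD := Ghat_diff_bounds ha1 (m / σ)
      have hm : σ ^ 2 * (m / σ) ^ 2 = m ^ 2 := by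
        field_simp
      rw [hFs m, hFs 0]
      simp only [zero_div]
      have h0 : (0:ℝ) ^ 2 = 0 := by norm_num
      rw [h0]
      have hσ2 : (0:ℝ) < σ ^ 2 := by positivity
      have hu1 := mul_le_mul_of_nonneg_left hD.2 hσ2.le
      have hu2 := mul_nonneg hσ2.le hD.1
      rw [abs_le]
      constructor
      · nlinarith [hu1, hu2, hm]
      · nlinarith [hu1, hu2, hm]
    · have h1 := abs_Fs_le hσ hτ m
      have h2 := abs_Fs_le hσ hτ 0
      have := abs_sub (Fs m) (Fs 0)
      have hσ2 : (0:ℝ) < σ ^ 2 := by positivity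
      have : |Fs m - Fs 0| ≤ |Fs m| + |Fs 0| := abs_sub _ _
      nlinarith
  have hF0sq : Fs 0 ^ 2 = 4 * σ ^ 4 * τ * stdPhi a ^ 2 := by
    rw [hF0, ← hasq]
    ring
  constructor
  · rw [main_integral σ 0 0 τ hσ hτ]
    have hr : (∫ x, fsf σ τ x ∂gaussianReal 0 (σ ^ 2).toNNReal) = Fs 0 := rfl
    rw [hr]
    nlinarith [hF0sq]
  · rw [main_integral σ μ θ τ hσ hτ]
    have hrμ : (∫ x, fsf σ τ x ∂gaussianReal μ (σ ^ 2).toNNReal) = Fs μ := rfl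
    have hrθ : (∫ x, fsf σ τ x ∂gaussianReal θ (σ ^ 2).toNNReal) = Fs θ := rfl
    rw [hrμ, hrθ]
    have hexpand : μ ^ 2 * θ ^ 2 - Fs μ * Fs θ - -4 * σ ^ 4 * τ * stdPhi a ^ 2 - μ ^ 2 * θ ^ 2
        = -((Fs μ - Fs 0) * (Fs θ - Fs 0) + Fs 0 * (Fs μ - Fs 0) + Fs 0 * (Fs θ - Fs 0)) := by
      nlinarith [hF0sq]
    rw [hexpand, abs_neg]
    have h1 := hbound μ
    have h2 := hbound θ
    have hAm0 : 0 ≤ min (μ ^ 2) (3 * σ ^ 2 * τ) := (abs_nonneg _).trans h1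
    have hAt0 : 0 ≤ min (θ ^ 2) (3 * σ ^ 2 * τ) := (abs_nonneg _).trans h2
    have hB : |Fs 0| = 2 * σ ^ 2 * a * stdPhi a := by
      rw [hF0, abs_neg, abs_of_nonneg hB0]
    have htri : |(Fs μ - Fs 0) * (Fs θ - Fs 0) + Fs 0 * (Fs μ - Fs 0) + Fs 0 * (Fs θ - Fs 0)|
        ≤ |Fs μ - Fs 0| * |Fs θ - Fs 0| + |Fs 0| * |Fs μ - Fs 0| + |Fs 0| * |Fs θ - Fs 0| := by
      calc |(Fs μ - Fs 0) * (Fs θ - Fs 0) + Fs 0 * (Fs μ - Fs 0) + Fs 0 * (Fs θ - Fs 0)|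
          ≤ |(Fs μ - Fs 0) * (Fs θ - Fs 0) + Fs 0 * (Fs μ - Fs 0)| + |Fs 0 * (Fs θ - Fs 0)| :=
            abs_add_le _ _
        _ ≤ |(Fs μ - Fs 0) * (Fs θ - Fs 0)| + |Fs 0 * (Fs μ - Fs 0)| + |Fs 0 * (Fs θ - Fs 0)| := by
            have := abs_add_le ((Fs μ - Fs 0) * (Fs θ - Fs 0)) (Fs 0 * (Fs μ - Fs 0))
            linarith
        _ = |Fs μ - Fs 0| * |Fs θ - Fs 0| + |Fs 0| * |Fs μ - Fs 0| + |Fs 0| * |Fs θ - Fs 0| := by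
            rw [abs_mul, abs_mul, abs_mul]
    have hb1 : |Fs μ - Fs 0| * |Fs θ - Fs 0|
        ≤ min (μ ^ 2) (3 * σ ^ 2 * τ) * min (θ ^ 2) (3 * σ ^ 2 * τ) :=
      mul_le_mul h1 h2 (abs_nonneg _) hAm0
    have hb2 : |Fs 0| * |Fs μ - Fs 0| ≤ 2 * σ ^ 2 * a * stdPhi a * min (μ ^ 2) (3 * σ ^ 2 * τ) := by
      rw [hB]
      exact mul_le_mul_of_nonneg_left h1 hB0
    have hb3 : |Fs 0| * |Fs θ - Fs 0| ≤ 2 * σ ^ 2 * a * stdPhi a * min (θ ^ 2) (3 * σ ^ 2 * τ) := by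
      rw [hB]
      exact mul_le_mul_of_nonneg_left h2 hB0
    linarith
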